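/- For every real x and every t with 0 ≤ t < 1/2, the series ∑_{k=0}^∞ He_{2k}(x) · t^k / k! converges and ∑_{k=0}^∞ He_{2k}(x) · t^k / k! = (1 + 2t)^{−1/2} · exp( t·x² / (1 + 2t) ). -/

import Mathlib

open Polynomial Complex

noncomputable def uu (z : ℂ) : ℂ := (1 + 2*z) ^ (-2⁻¹ : ℂ)

noncomputable def FF (x : ℝ) (z : ℂ) : ℂ := uu z * Complex.exp ((x:ℂ)^2 * z / (1 + 2*z))

lemma h1 (z : ℂ) : HasDerivAt (fun z : ℂ => 1 + 2*z) 2 z := by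
  simpa using ((hasDerivAt_id z).const_mul (2:ℂ)).const_add 1

lemma hz0 {z : ℂ} (hz : 0 < (1 + 2*z).re) : (1 + 2*z) ≠ 0 := by
  intro h; rw [h] at hz; simp at hz

lemma usq {z : ℂ} (hz : 0 < (1 + 2*z).re) : uu z * uu z = (1 + 2*z)⁻¹ := by
  rw [uu, ← Complex.cpow_add _ _ (hz0 hz)]
  norm_num
  rw [show (-1 : ℂ) = ((-1 : ℤ) : ℂ) by norm_num, Complex.cpow_intCast]
  simp

lemma hasDerivAt_uu {z : ℂ} (hz : 0 < (1 + 2*z).re) :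
    HasDerivAt uu (-(uu z)^3) z := by
  have h := (h1 z).cpow_const (c := (-2⁻¹ : ℂ)) (Or.inl hz)
  have h3 : (1 + 2*z) ^ (-2⁻¹ - 1 : ℂ) = (uu z)^3 := by
    rw [show (-2⁻¹ - 1 : ℂ) = (-2⁻¹) + ((-2⁻¹) + (-2⁻¹)) by norm_num,
      Complex.cpow_add _ _ (hz0 hz), Complex.cpow_add _ _ (hz0 hz), uu]
    ring
  convert h using 1
  · rfl
  rw [h3]; ring

lemma hasDerivAt_exp_part (x : ℝ) {z : ℂ} (hz : 0 < (1 + 2*z).re) :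
    HasDerivAt (fun z : ℂ => Complex.exp ((x:ℂ)^2 * z / (1 + 2*z)))
      (Complex.exp ((x:ℂ)^2 * z / (1 + 2*z)) * ((x:ℂ)^2 * (uu z)^4)) z := by
  have hnum : HasDerivAt (fun z : ℂ => (x:ℂ)^2 * z) ((x:ℂ)^2) z := by
    simpa using (hasDerivAt_id z).const_mul ((x:ℂ)^2)
  have hq := hnum.div (h1 z) (hz0 hz)
  have hval : ((x:ℂ)^2 * (1 + 2*z) - (x:ℂ)^2 * z * 2) / (1 + 2*z)^2
      = (x:ℂ)^2 * (uu z)^4 := by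
    have h4 : (uu z)^4 = ((1 + 2*z)⁻¹)^2 := by
      rw [show (uu z)^4 = (uu z * uu z)^2 by ring, usq hz]
    rw [h4]
    field_simp
    ring
  exact (hq.cexp).congr_deriv (by rw [hval]; rfl)

theorem derivative_hermite (n : ℕ) :
    derivative (hermite (n + 1)) = (n + 1 : ℤ[X]) * hermite n := by
  induction n with
  | zero => simp [hermite_one]
  | succ n ih =>
    rw [hermite_succ (n+1), derivative_sub, derivative_mul, derivative_X, one_mul, ih,
      derivative_mul, hermite_succ n]
    simp only [derivative_add, derivative_natCast, derivative_one, add_zero, zero_add, zero_mul]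
    push_cast
    ring

theorem hermite_two_step (n : ℕ) :
    hermite (2*n + 2) = X^2 * hermite (2*n) - X * derivative (hermite (2*n))
      - ((2*n : ℕ) + 1 : ℤ[X]) * hermite (2*n) := by
  rw [show 2*n+2 = (2*n+1)+1 from rfl, hermite_succ (2*n+1), derivative_hermite (2*n),
    hermite_succ (2*n)]
  push_cast
  ring

noncomputable def PP (n : ℕ) : ℂ[X] := (hermite n).map (Int.castRingHom ℂ)

lemma PP_two_step (n : ℕ) (w : ℂ) :
    (PP (2*n + 2)).eval w = w^2 * (PP (2*n)).eval w - w * ((PP (2*n)).derivative.eval w)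
      - (2*(n:ℂ) + 1) * (PP (2*n)).eval w := by
  rw [PP, PP, hermite_two_step n]
  simp [Polynomial.derivative_map]

lemma isOpen_S : IsOpen {z : ℂ | 0 < (1 + 2*z).re} :=
  isOpen_lt continuous_const (Complex.continuous_re.comp (by continuity))

theorem iteratedDeriv_FF (x : ℝ) (n : ℕ) :
    ∀ z, 0 < (1 + 2*z).re → iteratedDeriv n (FF x) z
      = (uu z)^(2*n+1) * Complex.exp ((x:ℂ)^2 * z / (1 + 2*z)) * (PP (2*n)).eval ((x:ℂ) * uu z) := by
  induction n with
  | zero =>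
    intro z hz
    simp [FF, PP, iteratedDeriv_zero]
  | succ n ih =>
    intro z hz
    rw [iteratedDeriv_succ]
    have hev : iteratedDeriv n (FF x) =ᶠ[nhds z]
        (fun z => (uu z)^(2*n+1) * Complex.exp ((x:ℂ)^2 * z / (1 + 2*z))
          * (PP (2*n)).eval ((x:ℂ) * uu z)) :=
      Filter.eventuallyEq_of_mem (isOpen_S.mem_nhds hz) (fun w hw => ih w hw)
    rw [hev.deriv_eq]
    -- build HasDerivAt for the closed form
    have hu := hasDerivAt_uu hz
    have he := hasDerivAt_exp_part x hz
    have hpow : HasDerivAt (fun z => (uu z)^(2*n+1))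
        ((2*n+1 : ℕ) * (uu z)^(2*n) * (-(uu z)^3)) z := by
      have hp := hu.pow (2*n+1)
      simp only [Nat.add_sub_cancel] at hp
      exact hp
    have hxw : HasDerivAt (fun z => (x:ℂ) * uu z) ((x:ℂ) * -(uu z)^3) z := hu.const_mul _
    have hpoly : HasDerivAt (fun z => (PP (2*n)).eval ((x:ℂ) * uu z))
        ((PP (2*n)).derivative.eval ((x:ℂ) * uu z) * ((x:ℂ) * -(uu z)^3)) z := by
      exact (Polynomial.hasDerivAt (PP (2*n)) ((x:ℂ) * uu z)).comp z hxw
    have hG := (hpow.mul he).mul hpoly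
    refine (hG.deriv : _).trans ?_
    simp only [Pi.mul_apply]
    rw [show 2*(n+1)+1 = (2*n+1)+2 from by ring, show 2*(n+1) = 2*n+2 from rfl, PP_two_step]
    push_cast
    ring

lemma iteratedDeriv_FF_zero (x : ℝ) (n : ℕ) :
    iteratedDeriv n (FF x) 0 = ((aeval x (hermite (2*n)) : ℝ) : ℂ) := by
  have h0 : (0:ℝ) < (1 + 2*(0:ℂ)).re := by norm_num
  rw [iteratedDeriv_FF x n 0 h0]
  have hu0 : uu 0 = 1 := by simp [uu]
  rw [hu0]
  simp only [one_pow, mul_zero, zero_div, Complex.exp_zero, mul_one, one_mul]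
  rw [PP, Polynomial.eval_map]
  rw [aeval_def, show ((eval₂ (algebraMap ℤ ℝ) x (hermite (2*n)) : ℝ) : ℂ)
      = Complex.ofRealHom (eval₂ (algebraMap ℤ ℝ) x (hermite (2*n))) from rfl,
    Polynomial.hom_eval₂]
  congr 1

theorem hermite_even_generating_function (x t : ℝ) (ht0 : 0 ≤ t) (ht : t < 1 / 2) :
    HasSum (fun k : ℕ =>
        (Polynomial.aeval x (Polynomial.hermite (2 * k))) * t ^ k / (Nat.factorial k))
      ((Real.sqrt (1 + 2 * t))⁻¹ * Real.exp (t * x ^ 2 / (1 + 2 * t))) := by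
  have hb : ∀ z ∈ Metric.ball (0:ℂ) (1/2), 0 < (1 + 2*z).re := by
    intro z hz
    rw [Metric.mem_ball, dist_zero_right] at hz
    have h1 : |z.re| ≤ ‖z‖ := Complex.abs_re_le_norm z
    simp only [Complex.add_re, Complex.one_re, Complex.mul_re]
    have := abs_le.mp h1
    norm_num
    nlinarith [this.1, this.2]
  have hdiff : DifferentiableOn ℂ (FF x) (Metric.ball (0:ℂ) (1/2)) := by
    intro z hz
    exact (((hasDerivAt_uu (hb z hz)).mul
      (hasDerivAt_exp_part x (hb z hz))).differentiableAt).differentiableWithinAt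
  have htb : (t:ℂ) ∈ Metric.ball (0:ℂ) (1/2) := by
    rw [Metric.mem_ball, dist_zero_right, Complex.norm_real]
    rw [Real.norm_eq_abs, _root_.abs_of_nonneg ht0]
    exact ht
  have HT := Complex.hasSum_taylorSeries_on_ball hdiff htb
  have hterm : ∀ k : ℕ, ((k.factorial : ℂ))⁻¹ • ((t:ℂ) - 0)^k • iteratedDeriv k (FF x) 0
      = (((aeval x (hermite (2*k))) * t ^ k / (k.factorial) : ℝ) : ℂ) := by
    intro k
    rw [iteratedDeriv_FF_zero x k]
    simp only [smul_eq_mul, sub_zero]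
    push_cast
    ring
  rw [funext hterm] at HT
  have hpos : (0:ℝ) < 1 + 2*t := by linarith
  have hF : FF x t = (((Real.sqrt (1 + 2 * t))⁻¹ * Real.exp (t * x ^ 2 / (1 + 2 * t)) : ℝ) : ℂ) := by
    rw [FF, uu]
    have hc : (1 + 2*(t:ℂ)) = ((1 + 2*t : ℝ) : ℂ) := by push_cast; ring
    rw [hc]
    have h2 : ((1 + 2*t : ℝ) : ℂ) ^ (-2⁻¹ : ℂ) = (((1 + 2*t : ℝ) ^ (-2⁻¹ : ℝ) : ℝ) : ℂ) := by
      rw [Complex.ofReal_cpow hpos.le]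
      norm_num
    have h3 : (1 + 2*t : ℝ) ^ (-2⁻¹ : ℝ) = (Real.sqrt (1 + 2*t))⁻¹ := by
      rw [Real.rpow_neg hpos.le, Real.sqrt_eq_rpow]
      norm_num
    have h4 : (x:ℂ)^2 * (t:ℂ) / ((1 + 2*t : ℝ) : ℂ) = ((t * x^2 / (1 + 2*t) : ℝ) : ℂ) := by
      push_cast
      ring
    rw [h2, h3, h4, ← Complex.ofReal_exp, ← Complex.ofReal_mul]
  rw [hF] at HT
  exact Complex.hasSum_ofReal.mp HT
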